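/- Fix m ≥ 2 and n ≥ 0, and for σ a permutation of {1,…,m^n} let F(σ) denote the number of fixed points of σ. For σ drawn uniformly from the nonsimple m-nary butterfly permutations B_n^{(m)}: E F(σ) = 1 and E[F(σ)²] = n·(m−1) + 1. -/

import Mathlib

/-- Kronecker product of permutations: `(i, r) ↦ (σ i, π r)` under the
row-major identification `Fin (a * b) ≃ Fin a × Fin b`. -/
def permKron {a b : ℕ} (σ : Equiv.Perm (Fin a)) (π : Equiv.Perm (Fin b)) :
    Equiv.Perm (Fin (a * b)) :=
  finProdFinEquiv.symm.trans ((Equiv.prodCongr σ π).trans finProdFinEquiv)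

/-- Direct (block) sum of permutations: `(i, r) ↦ (i, π i r)`. -/
def permBlockSum {a b : ℕ} (π : Fin a → Equiv.Perm (Fin b)) :
    Equiv.Perm (Fin (a * b)) :=
  finProdFinEquiv.symm.trans ((Equiv.prodCongrRight π).trans finProdFinEquiv)

/-- The simple `m`-nary butterfly permutations of `Fin (m ^ n)`:
Kronecker products `τ^{a₁} ⊗ ⋯ ⊗ τ^{aₙ}` of powers of the standard `m`-cycle `τ = finRotate m`. -/
def simpleButterfly (m : ℕ) : (n : ℕ) → Set (Equiv.Perm (Fin (m ^ n)))
  | 0 => {1}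
  | n + 1 =>
    {σ | ∃ (a : ℤ) (π : Equiv.Perm (Fin (m ^ n))), π ∈ simpleButterfly m n ∧
      σ = (finCongr (pow_succ' m n).symm).permCongr (permKron (finRotate m ^ a) π)}

/-- The nonsimple `m`-nary butterfly permutations of `Fin (m ^ n)`:
`B₀ = {1}`, `B_{n+1} = {(τ^a ⊗ id) ∘ (σ₁ ⊕ ⋯ ⊕ σ_m) : σᵢ ∈ B_n}`. -/
def nonsimpleButterfly (m : ℕ) : (n : ℕ) → Set (Equiv.Perm (Fin (m ^ n)))
  | 0 => {1}
  | n + 1 =>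
    {σ | ∃ (a : ℤ) (π : Fin m → Equiv.Perm (Fin (m ^ n))),
      (∀ i, π i ∈ nonsimpleButterfly m n) ∧
      σ = (finCongr (pow_succ' m n).symm).permCongr
        (permKron (finRotate m ^ a) 1 * permBlockSum π)}

/-- The length of the longest increasing subsequence of a permutation. -/
noncomputable def LIS {M : ℕ} (σ : Equiv.Perm (Fin M)) : ℕ :=
  sSup {k | ∃ t : Finset (Fin M), t.card = k ∧ StrictMonoOn (⇑σ) ↑t}

/-- The length of the longest decreasing subsequence of a permutation. -/
noncomputable def LDS {M : ℕ} (σ : Equiv.Perm (Fin M)) : ℕ :=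
  sSup {k | ∃ t : Finset (Fin M), t.card = k ∧ StrictAntiOn (⇑σ) ↑t}

/-- The number of cycles in the disjoint cycle decomposition of `σ`,
counting fixed points as cycles of length 1. -/
def numCycles {M : ℕ} (σ : Equiv.Perm (Fin M)) : ℕ :=
  Multiset.card σ.cycleType + (Finset.univ.filter fun x => σ x = x).card

/-- The number of fixed points of `σ`. -/
def numFixed {M : ℕ} (σ : Equiv.Perm (Fin M)) : ℕ :=
  (Finset.univ.filter fun x => σ x = x).card

open Equiv Finset
open Fin.NatCast

def fixCnt {α : Type*} [Fintype α] [DecidableEq α] (σ : Equiv.Perm α) : ℕ :=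
  (Finset.univ.filter fun x => σ x = x).card

lemma fixCnt_permCongr {α β : Type*} [Fintype α] [DecidableEq α] [Fintype β] [DecidableEq β]
    (e : α ≃ β) (σ : Equiv.Perm α) : fixCnt (e.permCongr σ) = fixCnt σ := by
  unfold fixCnt
  apply Finset.card_bij (fun x _ => e.symm x)
  · intro x hx
    simp only [mem_filter, mem_univ, true_and, Equiv.permCongr_apply] at hx ⊢
    have := congrArg e.symm (Finset.mem_filter.mp hx).2
    simpa using this
  · intro x _ y _ h; exact e.symm.injective h
  · intro y hy
    simp only [mem_filter, mem_univ, true_and] at hy ⊢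
    exact ⟨e y, by simp [Equiv.permCongr_apply, hy], by simp⟩

lemma fixCnt_prod {α β : Type*} [Fintype α] [DecidableEq α] [Fintype β] [DecidableEq β]
    (σ : Equiv.Perm α) (π : α → Equiv.Perm β) :
    fixCnt ((((Equiv.prodCongrRight π).trans (Equiv.prodCongr σ (1 : Equiv.Perm β))) : Equiv.Perm (α × β))) =
      ∑ i, if σ i = i then fixCnt (π i) else 0 := by
  unfold fixCnt
  rw [Finset.card_filter, Fintype.sum_prod_type]
  refine Finset.sum_congr rfl fun i _ => ?_
  by_cases h : σ i = i
  · rw [if_pos h, Finset.card_filter]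
    refine Finset.sum_congr rfl fun r _ => ?_
    simp [Equiv.trans_apply, Prod.ext_iff, h]
  · rw [if_neg h]
    refine Finset.sum_eq_zero fun r _ => ?_
    simp [Equiv.trans_apply, Prod.ext_iff, h]

lemma kron_mul_block {a b : ℕ} (σ : Equiv.Perm (Fin a)) (π : Fin a → Equiv.Perm (Fin b)) :
    permKron σ 1 * permBlockSum π =
      (finProdFinEquiv (m := a) (n := b)).permCongr
        ((Equiv.prodCongrRight π).trans (Equiv.prodCongr σ 1)) := by
  ext x
  simp [permKron, permBlockSum, Equiv.permCongr_apply, Equiv.Perm.mul_apply, Equiv.trans_apply]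

lemma finRotate_pow_apply (k a : ℕ) (i : Fin (k+1)) :
    (finRotate (k+1) ^ a) i = i + (a : Fin (k+1)) := by
  induction a with
  | zero => simp
  | succ a ih =>
    rw [pow_succ']
    rw [Equiv.Perm.mul_apply, ih, finRotate_succ_apply, Nat.cast_add_one]
    rw [add_assoc]

lemma finRotate_zpow_reduce (k : ℕ) (a : ℤ) :
    finRotate (k+1) ^ a = finRotate (k+1) ^ (a % ((k+1:ℕ) : ℤ)).toNat := by
  have hone : finRotate (k+1) ^ (k+1) = 1 := by
    ext i
    simp [finRotate_pow_apply, Fin.natCast_self]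
  have h0 : (0:ℤ) ≤ a % ((k+1:ℕ) : ℤ) := Int.emod_nonneg a (by positivity)
  conv_lhs => rw [← Int.mul_ediv_add_emod a ((k+1:ℕ) : ℤ)]
  rw [zpow_add, zpow_mul, zpow_natCast, hone, one_zpow, one_mul]
  conv_lhs => rw [← Int.toNat_of_nonneg h0]
  rw [zpow_natCast]


lemma sum_piFinset_one {ι β : Type*} [Fintype ι] [DecidableEq ι] [DecidableEq β]
    (s : Finset β) (g : β → ℝ) (i : ι) :
    ∑ π ∈ Fintype.piFinset (fun _ : ι => s), g (π i) =
      (s.card : ℝ) ^ (Fintype.card ι - 1) * ∑ x ∈ s, g x := by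
  have h := Finset.prod_univ_sum (fun _ : ι => s) (fun k x => if k = i then g x else (1:ℝ))
  simp only [Finset.prod_ite_eq', Finset.mem_univ, if_true] at h
  rw [← h, ← Finset.mul_prod_erase Finset.univ _ (Finset.mem_univ i)]
  have h1 : (∑ x ∈ s, if i = i then g x else (1:ℝ)) = ∑ x ∈ s, g x := by simp
  have h2 : (∏ k ∈ Finset.univ.erase i, ∑ x ∈ s, if k = i then g x else (1:ℝ))
      = (s.card : ℝ) ^ (Fintype.card ι - 1) := by
    rw [Finset.prod_congr rfl (fun k hk => ?_), Finset.prod_const,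
      Finset.card_erase_of_mem (Finset.mem_univ i), Finset.card_univ]
    have hk' : k ≠ i := Finset.ne_of_mem_erase hk
    simp [hk']
  rw [h1, h2, mul_comm]

lemma sum_piFinset_two {ι β : Type*} [Fintype ι] [DecidableEq ι] [DecidableEq β]
    (s : Finset β) (g : β → ℝ) (i j : ι) (hij : j ≠ i) :
    ∑ π ∈ Fintype.piFinset (fun _ : ι => s), g (π i) * g (π j) =
      (s.card : ℝ) ^ (Fintype.card ι - 2) * ((∑ x ∈ s, g x) * (∑ x ∈ s, g x)) := by
  have hjmem : j ∈ Finset.univ.erase i := Finset.mem_erase.mpr ⟨hij, Finset.mem_univ j⟩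
  have h := Finset.prod_univ_sum (fun _ : ι => s)
    (fun k x => if k = i then g x else if k = j then g x else (1:ℝ))
  have hprod : ∀ π : ι → β,
      (∏ k, if k = i then g (π k) else if k = j then g (π k) else (1:ℝ)) = g (π i) * g (π j) := by
    intro π
    rw [← Finset.mul_prod_erase Finset.univ _ (Finset.mem_univ i),
      ← Finset.mul_prod_erase _ _ hjmem, if_pos rfl, if_neg hij, if_pos rfl]
    rw [Finset.prod_eq_one, mul_one]
    intro k hk
    have h1 : k ≠ j := Finset.ne_of_mem_erase hk
    have h2 : k ≠ i := Finset.ne_of_mem_erase (Finset.mem_of_mem_erase hk)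
    simp [h1, h2]
  simp only [hprod] at h
  rw [← h, ← Finset.mul_prod_erase Finset.univ _ (Finset.mem_univ i),
    ← Finset.mul_prod_erase _ _ hjmem]
  have h1 : (∑ x ∈ s, if i = i then g x else if i = j then g x else (1:ℝ)) = ∑ x ∈ s, g x := by simp
  have h1' : (∑ x ∈ s, if j = i then g x else if j = j then g x else (1:ℝ)) = ∑ x ∈ s, g x := by
    simp [hij]
  have h2 : (∏ k ∈ (Finset.univ.erase i).erase j,
      ∑ x ∈ s, if k = i then g x else if k = j then g x else (1:ℝ))
      = (s.card : ℝ) ^ (Fintype.card ι - 2) := by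
    have hconst : ∀ k ∈ (Finset.univ.erase i).erase j,
        (∑ x ∈ s, if k = i then g x else if k = j then g x else (1:ℝ)) = (s.card : ℝ) := by
      intro k hk
      have hk1 : k ≠ j := Finset.ne_of_mem_erase hk
      have hk2 : k ≠ i := Finset.ne_of_mem_erase (Finset.mem_of_mem_erase hk)
      simp [hk1, hk2]
    rw [Finset.prod_congr rfl hconst, Finset.prod_const,
      Finset.card_erase_of_mem hjmem, Finset.card_erase_of_mem (Finset.mem_univ i),
      Finset.card_univ]
    congr 1
  rw [h1, h1', h2]
  ring

def stepPerm (k n : ℕ) (p : Fin (k+1) × (Fin (k+1) → Equiv.Perm (Fin ((k+1)^n)))) :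
    Equiv.Perm (Fin ((k+1)^(n+1))) :=
  (finCongr (pow_succ' (k+1) n).symm).permCongr
    (permKron (finRotate (k+1) ^ ((p.1 : Fin (k+1)) : ℕ)) 1 * permBlockSum p.2)

lemma numFixed_stepPerm (k n : ℕ) (a : Fin (k+1))
    (π : Fin (k+1) → Equiv.Perm (Fin ((k+1)^n))) :
    numFixed (stepPerm k n (a, π)) = if a = 0 then ∑ i, numFixed (π i) else 0 := by
  show fixCnt _ = _
  unfold stepPerm
  simp only
  rw [kron_mul_block, fixCnt_permCongr, fixCnt_permCongr, fixCnt_prod]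
  have hcond : ∀ i : Fin (k+1), ((finRotate (k+1) ^ (a:ℕ)) i = i) ↔ a = 0 := fun i => by
    rw [finRotate_pow_apply, Fin.cast_val_eq_self, add_eq_left]
  by_cases ha : a = 0
  · simp [ha, hcond, numFixed, fixCnt]
  · simp [ha, hcond]

lemma stepPerm_injective (k n : ℕ) : Function.Injective (stepPerm k n) := by
  rintro ⟨a, π⟩ ⟨b, ρ⟩ h
  unfold stepPerm at h
  simp only at h
  have h1 := (Equiv.permCongr (finCongr (pow_succ' (k+1) n).symm)).injective h
  rw [kron_mul_block, kron_mul_block] at h1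
  have h2 := finProdFinEquiv.permCongr.injective h1
  have h3 : ∀ (i : Fin (k+1)) (r : Fin ((k+1)^n)),
      ((finRotate (k+1) ^ (a:ℕ)) i, π i r) = ((finRotate (k+1) ^ (b:ℕ)) i, ρ i r) := by
    intro i r
    have := DFunLike.congr_fun h2 (i, r)
    simpa [Equiv.trans_apply] using this
  have hr : 0 < (k+1)^n := pow_pos (Nat.succ_pos k) n
  have hab : a = b := by
    have := (Prod.ext_iff.mp (h3 0 ⟨0, hr⟩)).1
    rw [finRotate_pow_apply, finRotate_pow_apply, Fin.cast_val_eq_self,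
      Fin.cast_val_eq_self] at this
    exact add_left_cancel this
  have hπρ : π = ρ := by
    funext i
    exact Equiv.ext fun r => (Prod.ext_iff.mp (h3 i r)).2
  rw [hab, hπρ]

theorem key (m : ℕ) (hm : 2 ≤ m) (n : ℕ) :
    ∃ s : Finset (Equiv.Perm (Fin (m ^ n))),
      (↑s : Set (Equiv.Perm (Fin (m ^ n)))) = nonsimpleButterfly m n ∧ 0 < s.card ∧
      (∑ σ ∈ s, (numFixed σ : ℝ)) = s.card ∧
      (∑ σ ∈ s, (numFixed σ : ℝ) ^ 2) = s.card * ((n : ℝ) * ((m : ℝ) - 1) + 1) := by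
  classical
  obtain ⟨k, hk1, rfl⟩ : ∃ k, 1 ≤ k ∧ m = k + 1 := ⟨m - 1, by omega, by omega⟩
  induction n with
  | zero =>
    refine ⟨{1}, by rw [Finset.coe_singleton]; rfl, Finset.card_pos.mpr (Finset.singleton_nonempty _), ?_, ?_⟩ <;>
      rw [Finset.sum_singleton, Finset.card_singleton, numFixed,
        Finset.filter_true_of_mem (s := Finset.univ) (fun x _ => Equiv.Perm.one_apply x), Finset.card_univ, Fintype.card_fin, pow_zero] <;> norm_num
  | succ n ih =>
    obtain ⟨s, hs, hc, hA, hQ⟩ := ih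
    set V : Finset (Fin (k+1) → Equiv.Perm (Fin ((k+1)^n))) :=
      Fintype.piFinset (fun _ : Fin (k+1) => s) with hV
    set T : Finset (Equiv.Perm (Fin ((k+1)^(n+1)))) :=
      ((Finset.univ : Finset (Fin (k+1))) ×ˢ V).image (stepPerm k n) with hT
    have hinj := stepPerm_injective k n
    -- set equality
    have hTset : (↑T : Set (Equiv.Perm (Fin ((k+1)^(n+1))))) = nonsimpleButterfly (k+1) (n+1) := by
      ext σ
      simp only [hT, Finset.coe_image, Set.mem_image, Finset.mem_coe, Finset.mem_product,
        Fintype.mem_piFinset, Finset.mem_univ, true_and, hV]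
      show _ ↔ σ ∈ {σ | ∃ (a : ℤ) (π : Fin (k+1) → Equiv.Perm (Fin ((k+1) ^ n))),
        (∀ i, π i ∈ nonsimpleButterfly (k+1) n) ∧
        σ = (finCongr (pow_succ' (k+1) n).symm).permCongr
          (permKron (finRotate (k+1) ^ a) 1 * permBlockSum π)}
      simp only [Set.mem_setOf_eq]
      constructor
      · rintro ⟨⟨a, π⟩, hmem, rfl⟩
        refine ⟨((a : ℕ) : ℤ), π, fun i => ?_, ?_⟩
        · rw [← hs]; exact hmem i
        · unfold stepPerm
          rw [zpow_natCast]
      · rintro ⟨a, π, hπ, rfl⟩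
        have h0 : (0:ℤ) ≤ a % ((k+1:ℕ) : ℤ) := Int.emod_nonneg a (by positivity)
        have hlt : a % ((k+1:ℕ) : ℤ) < ((k+1:ℕ) : ℤ) := Int.emod_lt_of_pos a (by positivity)
        have hb : (a % ((k+1:ℕ) : ℤ)).toNat < k + 1 := by omega
        refine ⟨(⟨(a % ((k+1:ℕ) : ℤ)).toNat, hb⟩, π), fun i => ?_, ?_⟩
        · rw [← Finset.mem_coe, hs]; exact hπ i
        · unfold stepPerm
          simp only
          rw [finRotate_zpow_reduce]
    have hTcard : T.card = (k+1) * s.card ^ (k+1) := by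
      rw [hT, Finset.card_image_of_injective _ hinj, Finset.card_product, Finset.card_univ,
        Fintype.card_fin, hV, Fintype.card_piFinset]
      simp [Finset.prod_const, Finset.card_univ]
    have hTpos : 0 < T.card := by
      rw [hTcard]; positivity
    -- casts
    have hkcast : (((k+1 : ℕ)) : ℝ) - 1 = (k : ℝ) := by push_cast; ring
    rw [hkcast] at hQ
    -- per-coordinate sums
    have hUA : ∀ i : Fin (k+1),
        ∑ π ∈ V, (numFixed (π i) : ℝ) = (s.card:ℝ)^k * (s.card:ℝ) := by
      intro i
      rw [hV, sum_piFinset_one s (fun σ => (numFixed σ : ℝ)) i, hA, Fintype.card_fin,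
        Nat.add_sub_cancel]
    have hUQ : ∀ i : Fin (k+1),
        ∑ π ∈ V, (numFixed (π i) : ℝ) * (numFixed (π i) : ℝ)
          = (s.card:ℝ)^k * ((s.card:ℝ) * ((n:ℝ) * (k:ℝ) + 1)) := by
      intro i
      rw [hV, sum_piFinset_one s (fun σ => (numFixed σ : ℝ) * (numFixed σ : ℝ)) i,
        Fintype.card_fin, Nat.add_sub_cancel]
      congr 1
      rw [← hQ]
      exact Finset.sum_congr rfl fun x _ => (sq ((numFixed x : ℝ))).symm
    have hUpair : ∀ i j : Fin (k+1), j ≠ i →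
        ∑ π ∈ V, (numFixed (π i) : ℝ) * (numFixed (π j) : ℝ)
          = (s.card:ℝ)^(k-1) * ((s.card:ℝ) * (s.card:ℝ)) := by
      intro i j hij
      rw [hV, sum_piFinset_two s (fun σ => (numFixed σ : ℝ)) i j hij, hA, Fintype.card_fin]
      congr 2
    -- first moment over T
    have hST : ∑ σ ∈ T, (numFixed σ : ℝ) = ((k:ℝ)+1) * ((s.card:ℝ)^k * (s.card:ℝ)) := by
      rw [hT, Finset.sum_image (fun x _ y _ h => hinj h), Finset.sum_product]
      have hterm : ∀ a : Fin (k+1),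
          (∑ π ∈ V, (numFixed (stepPerm k n (a, π)) : ℝ))
            = if a = 0 then ((k:ℝ)+1) * ((s.card:ℝ)^k * (s.card:ℝ)) else 0 := by
        intro a
        by_cases ha : a = 0
        · simp only [ha, if_pos rfl]
          have : ∀ π ∈ V, (numFixed (stepPerm k n ((0 : Fin (k+1)), π)) : ℝ)
              = ∑ i, (numFixed (π i) : ℝ) := by
            intro π _
            rw [numFixed_stepPerm]
            simp
          rw [Finset.sum_congr rfl this, Finset.sum_comm,
            Finset.sum_congr rfl (fun i _ => hUA i), Finset.sum_const, Finset.card_univ,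
            Fintype.card_fin, nsmul_eq_mul]
          push_cast
          ring
        · rw [if_neg ha]
          refine Finset.sum_eq_zero fun π _ => ?_
          rw [numFixed_stepPerm, if_neg ha]
          simp
      rw [Finset.sum_congr rfl (fun a _ => hterm a), Finset.sum_ite_eq' Finset.univ (0 : Fin (k+1))]
      simp
    -- second moment over T
    have hST2 : ∑ σ ∈ T, (numFixed σ : ℝ)^2
        = ((k:ℝ)+1) * ((s.card:ℝ)^k * ((s.card:ℝ) * ((n:ℝ)*(k:ℝ)+1))
            + (k:ℝ) * ((s.card:ℝ)^(k-1) * ((s.card:ℝ) * (s.card:ℝ)))) := by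
      rw [hT, Finset.sum_image (fun x _ y _ h => hinj h), Finset.sum_product]
      have hterm : ∀ a : Fin (k+1),
          (∑ π ∈ V, (numFixed (stepPerm k n (a, π)) : ℝ)^2)
            = if a = 0 then ((k:ℝ)+1) * ((s.card:ℝ)^k * ((s.card:ℝ) * ((n:ℝ)*(k:ℝ)+1))
                + (k:ℝ) * ((s.card:ℝ)^(k-1) * ((s.card:ℝ) * (s.card:ℝ)))) else 0 := by
        intro a
        by_cases ha : a = 0
        · simp only [ha, if_pos rfl]
          have hv : ∀ π ∈ V, (numFixed (stepPerm k n ((0 : Fin (k+1)), π)) : ℝ)^2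
              = ∑ i, ∑ j, (numFixed (π i) : ℝ) * (numFixed (π j) : ℝ) := by
            intro π _
            rw [numFixed_stepPerm]
            simp only [if_pos rfl]
            push_cast
            rw [sq, Finset.sum_mul_sum]
          rw [Finset.sum_congr rfl hv, Finset.sum_comm]
          have hi : ∀ i : Fin (k+1),
              (∑ π ∈ V, ∑ j, (numFixed (π i) : ℝ) * (numFixed (π j) : ℝ))
                = (s.card:ℝ)^k * ((s.card:ℝ) * ((n:ℝ)*(k:ℝ)+1))
                  + (k:ℝ) * ((s.card:ℝ)^(k-1) * ((s.card:ℝ) * (s.card:ℝ))) := by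
            intro i
            rw [Finset.sum_comm]
            have hj : ∀ j : Fin (k+1),
                (∑ π ∈ V, (numFixed (π i) : ℝ) * (numFixed (π j) : ℝ))
                  = if j = i then (s.card:ℝ)^k * ((s.card:ℝ) * ((n:ℝ)*(k:ℝ)+1))
                    else (s.card:ℝ)^(k-1) * ((s.card:ℝ) * (s.card:ℝ)) := by
              intro j
              by_cases hij : j = i
              · rw [if_pos hij, hij]; exact hUQ i
              · rw [if_neg hij]; exact hUpair i j hij
            rw [Finset.sum_congr rfl (fun j _ => hj j),
              ← Finset.add_sum_erase _ _ (Finset.mem_univ i), if_pos rfl]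
            have : ∀ j ∈ Finset.univ.erase i,
                (if j = i then (s.card:ℝ)^k * ((s.card:ℝ) * ((n:ℝ)*(k:ℝ)+1))
                  else (s.card:ℝ)^(k-1) * ((s.card:ℝ) * (s.card:ℝ)))
                  = (s.card:ℝ)^(k-1) * ((s.card:ℝ) * (s.card:ℝ)) := by
              intro j hjmem
              rw [if_neg (Finset.ne_of_mem_erase hjmem)]
            rw [Finset.sum_congr rfl this, Finset.sum_const,
              Finset.card_erase_of_mem (Finset.mem_univ i), Finset.card_univ, Fintype.card_fin,
              Nat.add_sub_cancel, nsmul_eq_mul]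
          rw [Finset.sum_congr rfl (fun i _ => hi i), Finset.sum_const, Finset.card_univ,
            Fintype.card_fin, nsmul_eq_mul]
          push_cast
          ring
        · rw [if_neg ha]
          refine Finset.sum_eq_zero fun π _ => ?_
          rw [numFixed_stepPerm, if_neg ha]
          simp
      rw [Finset.sum_congr rfl (fun a _ => hterm a), Finset.sum_ite_eq' Finset.univ (0 : Fin (k+1))]
      simp
    -- pow identities
    have ek : (s.card:ℝ)^k = (s.card:ℝ)^(k-1) * (s.card:ℝ) := by
      rw [← pow_succ]
      congr 1
      omega
    have ek1 : (s.card:ℝ)^(k+1) = (s.card:ℝ)^(k-1) * (s.card:ℝ) * (s.card:ℝ) := by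
      rw [← pow_succ, ← pow_succ]
      congr 1
      omega
    refine ⟨T, hTset, hTpos, ?_, ?_⟩
    · rw [hST, hTcard]
      push_cast
      rw [ek, ek1]
    · rw [hST2, hTcard, hkcast]
      push_cast
      rw [ek, ek1]
      ring


/-- For `σ` uniform on the nonsimple `m`-nary butterfly permutations `B_n^{(m)}`, the
number of fixed points `F(σ)` satisfies `E F(σ) = 1` and `E[F(σ)²] = n(m−1) + 1`. -/
theorem nonsimpleButterfly_fixed_point_moments (m n : ℕ) (hm : 2 ≤ m) :
    (1 / ((nonsimpleButterfly m n).ncard : ℝ)) *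
        ∑ᶠ σ ∈ nonsimpleButterfly m n, (numFixed σ : ℝ) = 1 ∧
    (1 / ((nonsimpleButterfly m n).ncard : ℝ)) *
        ∑ᶠ σ ∈ nonsimpleButterfly m n, (numFixed σ : ℝ) ^ 2 =
      (n : ℝ) * ((m : ℝ) - 1) + 1 := by
  obtain ⟨s, hs, hc, hA, hQ⟩ := key m hm n
  have hc' : ((s.card : ℕ) : ℝ) ≠ 0 := ne_of_gt (by exact_mod_cast hc)
  rw [← hs, Set.ncard_coe_finset, finsum_mem_coe_finset, finsum_mem_coe_finset, hA, hQ]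
  constructor
  · field_simp
  · field_simp
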